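/- Let b : P_∞ → 2^ω be a continuous map which is nowhere dense-to-one, i.e., b⁻¹({γ}) is nowhere dense in 2^ω for every γ ∈ 2^ω. Then there is an injective continuous map f : 2^ω → 2^ω such that f⁻¹(P_f) = P_f and b(f(α)) ≠ b(f(β)) whenever α ≠ β are both in P_∞. -/

import Mathlib

/-- The set of eventually-zero binary sequences. -/
def Pfin : Set (ℕ → Bool) := {α | ∃ N : ℕ, ∀ n ≥ N, α n = false}

/-- The set of binary sequences with infinitely many ones. -/
def Pinf : Set (ℕ → Bool) := Pfinᶜ

namespace IND

/-- `y` extends the length-`N` prefix of `x`, i.e. `y ∈ [x↾N]`. -/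
def Ext (x : ℕ → Bool) (N : ℕ) (y : ℕ → Bool) : Prop := ∀ i < N, y i = x i

lemma Ext.rfl {x : ℕ → Bool} {N : ℕ} : Ext x N x := fun _ _ => _root_.rfl

lemma Ext.mono {x y : ℕ → Bool} {N M : ℕ} (h : Ext x N y) (hm : M ≤ N) : Ext x M y :=
  fun i hi => h i (lt_of_lt_of_le hi hm)

lemma Ext.trans {x y z : ℕ → Bool} {N M : ℕ} (h1 : Ext x N y) (h2 : Ext y M z) (hm : N ≤ M) :
    Ext x N z := fun i hi => ((h2 i (lt_of_lt_of_le hi hm)).trans (h1 i hi))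

/-- fill with `true`s beyond `N`. -/
def padTrue (x : ℕ → Bool) (N : ℕ) : ℕ → Bool := fun i => if i < N then x i else true

/-- fill with `false`s beyond `N`. -/
def padFalse (x : ℕ → Bool) (N : ℕ) : ℕ → Bool := fun i => if i < N then x i else false

lemma padTrue_ext (x : ℕ → Bool) (N : ℕ) : Ext x N (padTrue x N) := by
  intro i hi; simp [padTrue, hi]

lemma padFalse_ext (x : ℕ → Bool) (N : ℕ) : Ext x N (padFalse x N) := by
  intro i hi; simp [padFalse, hi]

lemma padTrue_mem_Pinf (x : ℕ → Bool) (N : ℕ) : padTrue x N ∈ Pinf := by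
  intro hmem
  obtain ⟨K, hK⟩ := hmem
  have := hK (max K N) (le_max_left _ _)
  simp [padTrue, Nat.not_lt.mpr (le_max_right K N)] at this

lemma padFalse_mem_Pfin (x : ℕ → Bool) (N : ℕ) : padFalse x N ∈ Pfin := by
  exact ⟨N, fun n hn => by simp [padFalse, Nat.not_lt.mpr hn]⟩

lemma mem_Pinf_iff {α : ℕ → Bool} : α ∈ Pinf ↔ ∀ N, ∃ n ≥ N, α n = true := by
  constructor
  · intro h N
    by_contra hc
    push_neg at hc
    exact h ⟨N, fun n hn => by
      have := hc n hn
      exact (Bool.not_eq_true _).mp this⟩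
  · intro h hmem
    obtain ⟨K, hK⟩ := hmem
    obtain ⟨n, hn, ht⟩ := h K
    rw [hK n hn] at ht; exact Bool.false_ne_true ht

/-- difference index for two distinct sequences -/
lemma exists_diff {x y : ℕ → Bool} (h : x ≠ y) : ∃ j, x j ≠ y j :=
  Function.ne_iff.mp h

/-- cylinders are open -/
lemma isOpen_cyl (x : ℕ → Bool) (N : ℕ) : IsOpen {y | Ext x N y} := by
  have : {y : ℕ → Bool | Ext x N y} = ⋂ i ∈ Finset.range N, {y | y i = x i} := by
    ext y
    simp only [Set.mem_setOf_eq, Set.mem_iInter, Finset.mem_range]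
    exact ⟨fun h i hi => h i hi, fun h i hi => h i hi⟩
  rw [this]
  refine isOpen_biInter_finset (fun i _ => ?_)
  have : {y : ℕ → Bool | y i = x i} = (fun (y : ℕ → Bool) => y i) ⁻¹' {x i} := rfl
  rw [this]
  exact (isOpen_discrete _).preimage (continuous_apply i)

/-- every open neighbourhood contains a cylinder -/
lemma cyl_of_nhds {y : ℕ → Bool} {U : Set (ℕ → Bool)} (h : U ∈ nhds y) :
    ∃ N, ∀ z, Ext y N z → z ∈ U := by
  obtain ⟨V, hVU, hVopen, hyV⟩ := mem_nhds_iff.mp h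
  obtain ⟨I, u, hu, hsub⟩ := isOpen_pi_iff.mp hVopen y hyV
  rcases I.eq_empty_or_nonempty with hI | hI
  · exact ⟨0, fun z _ => hVU (hsub (by simp [hI]))⟩
  · refine ⟨(I.max' hI) + 1, fun z hz => hVU (hsub ?_)⟩
    intro a ha
    have : z a = y a := hz a (Nat.lt_succ_of_le (I.le_max' a ha))
    rw [this]; exact (hu a ha).2

lemma cyl_mem_nhds (y : ℕ → Bool) (N : ℕ) : {z | Ext y N z} ∈ nhds y :=
  (isOpen_cyl y N).mem_nhds Ext.rfl

/-- Pinf is dense in each cylinder (witness). -/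
lemma cyl_inter_Pinf (x : ℕ → Bool) (N : ℕ) :
    ∃ y, y ∈ Pinf ∧ Ext x N y := ⟨padTrue x N, padTrue_mem_Pinf x N, padTrue_ext x N⟩

end IND

namespace IND

/-- auxiliary: a uniform bound below which `y` differs from finitely many sequences -/
lemma exists_unif_diff (y : ℕ → Bool) (g : ℕ → (ℕ → Bool)) (K : ℕ)
    (h : ∀ i < K, y ≠ g i) : ∃ Nd, ∀ i < K, ∃ l < Nd, y l ≠ g i l := by
  induction K with
  | zero => exact ⟨0, fun i hi => absurd hi (Nat.not_lt_zero i)⟩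
  | succ K ih =>
    obtain ⟨Nd, hNd⟩ := ih (fun i hi => h i (Nat.lt_succ_of_lt hi))
    obtain ⟨l0, hl0⟩ := exists_diff (h K (Nat.lt_succ_self K))
    refine ⟨max Nd (l0 + 1), fun i hi => ?_⟩
    rcases Nat.lt_succ_iff_lt_or_eq.mp hi with hi' | hi'
    · obtain ⟨l, hl, hne⟩ := hNd i hi'
      exact ⟨l, lt_of_lt_of_le hl (le_max_left _ _), hne⟩
    · subst hi'
      exact ⟨l0, lt_of_lt_of_le (Nat.lt_succ_self l0) (le_max_right _ _), hl0⟩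

/-- data attached to a node of the construction tree -/
structure ND (b : Pinf → (ℕ → Bool)) where
  dep : ℕ
  w : ℕ → Bool
  N : ℕ
  q : ℕ → Bool
  θ : ℕ → Bool
  k : ℕ
  trapv : ℕ → Bool
  trapm : ℕ
  hdepN : dep ≤ N
  hNk : N ≤ k
  hqext : Ext w N q
  hqfin : q ∈ Pfin
  hsup : ∀ n m, ∃ y, ∃ hy : y ∈ Pinf, Ext q n y ∧ ∀ i < m, b ⟨y, hy⟩ i = θ i
  htrap : ∀ z (hz : z ∈ Pinf), Ext w N z → ∀ i < trapm, b ⟨z, hz⟩ i = trapv i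

/-- the joint properties of the two children produced in one construction step -/
def StepProps (b : Pinf → (ℕ → Bool)) (r : ℕ → (ℕ → Bool)) (d d0 d1 : ND b) : Prop :=
  d0.dep = d.dep + 1 ∧ d1.dep = d.dep + 1 ∧
  (Ext d.w d.N d0.w ∧ d.N < d0.N) ∧ (Ext d.w d.N d1.w ∧ d.N < d1.N) ∧
  (∃ i, i < d0.N ∧ i < d1.N ∧ d0.w i ≠ d1.w i) ∧
  d0.q = d.q ∧ d0.θ = d.θ ∧ d.k ≤ d0.k ∧
  (∀ i < d.k, d1.trapv i = d.θ i) ∧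
  (∃ j, d.k ≤ j ∧ j < d0.k ∧ j < d1.trapm ∧ d1.trapv j ≠ d.θ j) ∧
  (∀ i < d1.dep, ¬ Ext d1.w d1.N (r i)) ∧
  (∀ z (hz : z ∈ Pinf), Ext d1.w d1.N z → ∀ i < d1.trapm, b ⟨z, hz⟩ i = d1.trapv i)


section WithB

variable (b : Pinf → (ℕ → Bool)) (hb : Continuous b)
variable (hfib : ∀ γ : ℕ → Bool, IsNowhereDense (Subtype.val '' (b ⁻¹' {γ})))
variable (r : ℕ → (ℕ → Bool)) (hr : Pfin = Set.range r)

include hb in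
/-- continuity: prefixes of `b` are determined by prefixes of the argument -/
lemma cont_prefix (y : ℕ → Bool) (hy : y ∈ Pinf) (m : ℕ) :
    ∃ Nc, ∀ z (hz : z ∈ Pinf), Ext y Nc z → ∀ i < m, b ⟨z, hz⟩ i = b ⟨y, hy⟩ i := by
  have hev : ∀ᶠ p : Pinf in nhds ⟨y, hy⟩, ∀ i < m, b p i = b ⟨y, hy⟩ i := by
    induction m with
    | zero => filter_upwards with p i hi; omega
    | succ m ih =>
      have h1 : ∀ᶠ p : Pinf in nhds ⟨y, hy⟩, b p m = b ⟨y, hy⟩ m := by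
        have hcont : Continuous fun p : Pinf => b p m := (continuous_apply m).comp hb
        have : IsOpen {p : Pinf | b p m = b ⟨y, hy⟩ m} := by
          have : {p : Pinf | b p m = b ⟨y, hy⟩ m}
              = (fun p : Pinf => b p m) ⁻¹' {b ⟨y, hy⟩ m} := rfl
          rw [this]; exact (isOpen_discrete _).preimage hcont
        exact this.mem_nhds (by simp)
      filter_upwards [ih, h1] with p hp hpm i hi
      rcases Nat.lt_succ_iff_lt_or_eq.mp hi with h | h
      · exact hp i h
      · subst h; exact hpm
  have hev' : {p : Pinf | ∀ i < m, b p i = b ⟨y, hy⟩ i} ∈ nhds ⟨y, hy⟩ := hev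
  rw [mem_nhds_subtype] at hev'
  obtain ⟨u, hu, hsub⟩ := hev'
  obtain ⟨N, hN⟩ := cyl_of_nhds hu
  exact ⟨N, fun z hz hzN => hsub (by exact hN z hzN)⟩

include hfib in
/-- nowhere-dense fibers: escape a single value inside any cylinder -/
lemma nwd_escape (x : ℕ → Bool) (N : ℕ) (θ : ℕ → Bool) :
    ∃ z, ∃ hz : z ∈ Pinf, Ext x N z ∧ b ⟨z, hz⟩ ≠ θ := by
  by_contra hc
  push_neg at hc
  have hsub : {z | Ext x N z} ⊆ closure (Subtype.val '' (b ⁻¹' {θ})) := by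
    intro w hw
    rw [mem_closure_iff_nhds]
    intro U hU
    obtain ⟨n, hn⟩ := cyl_of_nhds hU
    set z := padTrue w (max n N) with hzdef
    have hz : z ∈ Pinf := padTrue_mem_Pinf _ _
    have hzw : Ext w (max n N) z := padTrue_ext _ _
    have hzU : z ∈ U := hn z (hzw.mono (le_max_left _ _))
    have hzx : Ext x N z := Ext.trans hw (hzw.mono (le_max_right _ _)) le_rfl
    have := hc z hz hzx
    exact ⟨z, hzU, ⟨⟨z, hz⟩, by simpa using this, rfl⟩⟩
  have hint : ({y | Ext x N y} : Set (ℕ → Bool)) ⊆ interior (closure (Subtype.val '' (b ⁻¹' {θ}))) := by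
    intro w hw
    exact interior_maximal hsub (isOpen_cyl x N) hw
  have hne : (interior (closure (Subtype.val '' (b ⁻¹' {θ})))).Nonempty :=
    ⟨x, hint Ext.rfl⟩
  have hemp : interior (closure (Subtype.val '' (b ⁻¹' {θ}))) = ∅ := hfib θ
  rw [hemp] at hne
  exact Set.not_nonempty_empty hne

/-- existence of an Ω-point: a value approximated arbitrarily well inside
arbitrarily small cylinders around `q` -/
lemma omega_spec (q : ℕ → Bool) :
    ∃ θ : ℕ → Bool, ∀ n m, ∃ y, ∃ hy : y ∈ Pinf, Ext q n y ∧
      ∀ i < m, b ⟨y, hy⟩ i = θ i := by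
  set S : ℕ → Set (ℕ → Bool) :=
    fun n => {v | ∃ y, ∃ hy : y ∈ Pinf, Ext q n y ∧ b ⟨y, hy⟩ = v} with hS
  have hSne : ∀ n, (S n).Nonempty := by
    intro n
    obtain ⟨y, hy, hext⟩ := cyl_inter_Pinf q n
    exact ⟨b ⟨y, hy⟩, y, hy, hext, rfl⟩
  have hSmono : ∀ {n n'}, n ≤ n' → S n' ⊆ S n := by
    intro n n' h v hv
    obtain ⟨y, hy, hext, hbv⟩ := hv
    exact ⟨y, hy, hext.mono h, hbv⟩
  set K : ℕ → Set (ℕ → Bool) := fun n => closure (S n) with hK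
  have hKne : ∀ n, (K n).Nonempty := fun n => (hSne n).closure
  have hKdir : Directed (fun x1 x2 => x1 ⊇ x2) K := by
    intro n n'
    exact ⟨max n n', closure_mono (hSmono (le_max_left _ _)),
      closure_mono (hSmono (le_max_right _ _))⟩
  have hKcl : ∀ n, IsClosed (K n) := fun n => isClosed_closure
  have hKcpt : ∀ n, IsCompact (K n) := fun n => (hKcl n).isCompact
  obtain ⟨θ, hθ⟩ := IsCompact.nonempty_iInter_of_directed_nonempty_isCompact_isClosed
    K hKdir hKne hKcpt hKcl
  refine ⟨θ, fun n m => ?_⟩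
  have hθn : θ ∈ K n := Set.mem_iInter.mp hθ n
  rw [mem_closure_iff_nhds] at hθn
  obtain ⟨v, hvU, hvS⟩ := hθn {v | Ext θ m v} (cyl_mem_nhds θ m)
  obtain ⟨y, hy, hext, hbv⟩ := hvS
  exact ⟨y, hy, hext, fun i hi => by rw [hbv]; exact hvU i hi⟩

include hb hfib in
/-- the workhorse picking lemma: inside any cylinder around `q` pick a point of `Pinf`
whose value agrees with `θ` up to `m` but differs from `θ` somewhere. -/
lemma pick (q θ : ℕ → Bool)
    (hsup : ∀ n m, ∃ y, ∃ hy : y ∈ Pinf, Ext q n y ∧ ∀ i < m, b ⟨y, hy⟩ i = θ i)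
    (n m : ℕ) :
    ∃ y, ∃ hy : y ∈ Pinf, Ext q n y ∧ (∀ i < m, b ⟨y, hy⟩ i = θ i) ∧ b ⟨y, hy⟩ ≠ θ := by
  obtain ⟨y₀, hy₀, hexty₀, hval₀⟩ := hsup n m
  obtain ⟨Nc, hNc⟩ := cont_prefix b hb y₀ hy₀ m
  set N₁ := max (max Nc n) 1 with hN₁
  obtain ⟨z, hz, hextz, hne⟩ := nwd_escape b hfib y₀ N₁ θ
  refine ⟨z, hz, ?_, ?_, hne⟩
  · exact Ext.trans hexty₀ (hextz.mono (le_trans (le_max_right Nc n) (le_max_left _ _))) le_rfl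
  · intro i hi
    have := hNc z hz (hextz.mono (le_trans (le_max_left Nc n) (le_max_left _ _))) i hi
    rw [this]; exact hval₀ i hi

include hb hfib hr in
lemma step_ex (d : ND b) : ∃ d0 d1 : ND b, StepProps b r d d0 d1 := by
  classical
  -- pick the witness point y for the 1-child
  obtain ⟨y, hy, hyq, hyval, hyne⟩ := pick b hb hfib d.q d.θ d.hsup d.N d.k
  -- the coordinate where b y differs from θ
  obtain ⟨j, hj⟩ := exists_diff hyne
  have hjk : d.k ≤ j := by
    by_contra hc
    exact hj (hyval j (Nat.lt_of_not_le hc))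
  -- continuity depth for precision j+1
  obtain ⟨Nc, hNc⟩ := cont_prefix b hb y hy (j + 1)
  -- y differs from q
  have hyq_ne : y ≠ d.q := by
    intro hcontra
    exact hy (hcontra ▸ d.hqfin)
  obtain ⟨jq, hjq⟩ := exists_diff hyq_ne
  -- y differs from each rational r i
  have hyr : ∀ i < d.dep + 1, y ≠ r i := by
    intro i _ hcontra
    apply hy
    rw [hcontra, hr]
    exact Set.mem_range_self i
  obtain ⟨Nd, hNd⟩ := exists_unif_diff y r (d.dep + 1) hyr
  -- the depth of the 1-child region
  set N₁ := max (max Nc (d.N + 1)) (max (jq + 1) Nd) with hN₁def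
  have hN₁Nc : Nc ≤ N₁ := le_trans (le_max_left _ _) (le_max_left _ _)
  have hN₁N : d.N + 1 ≤ N₁ := le_trans (le_max_right _ _) (le_max_left _ _)
  have hN₁jq : jq + 1 ≤ N₁ := le_trans (le_max_left _ _) (le_max_right _ _)
  have hN₁Nd : Nd ≤ N₁ := le_trans (le_max_right _ _) (le_max_right _ _)
  -- 0-child region depth
  set n₀ := max (d.N + 1) (jq + 1) with hn₀def
  -- θ for the 1-child's tail
  obtain ⟨θ', hθ'⟩ := omega_spec b (padFalse y N₁)
  -- the 0-child
  refine ⟨⟨d.dep + 1, d.q, n₀, d.q, d.θ, max (j + 1) n₀, d.trapv, d.trapm,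
      ?_, le_max_right _ _, Ext.rfl, d.hqfin, d.hsup, ?_⟩,
    -- the 1-child
    ⟨d.dep + 1, y, N₁, padFalse y N₁, θ', N₁, b ⟨y, hy⟩, j + 1,
      ?_, le_rfl, padFalse_ext y N₁, padFalse_mem_Pfin y N₁, hθ', ?_⟩,
    ?_, ?_, ?_, ?_, ?_, ?_, ?_, ?_, ?_, ?_, ?_, ?_⟩
  · -- hdepN for d0
    exact le_trans (Nat.succ_le_succ d.hdepN) (le_max_left _ _)
  · -- htrap for d0 : region shrank
    intro z hz hzext i hi
    have hzw : Ext d.w d.N z :=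
      Ext.trans d.hqext (hzext.mono (le_trans (Nat.le_succ _) (le_max_left _ _)))
        le_rfl
    exact d.htrap z hz hzw i hi
  · -- hdepN for d1
    exact le_trans (Nat.succ_le_succ d.hdepN) hN₁N
  · -- htrap for d1 : continuity pin
    intro z hz hzext i hi
    exact hNc z hz (hzext.mono hN₁Nc) i hi
  · rfl
  · rfl
  · -- region nesting for d0
    exact ⟨d.hqext, lt_of_lt_of_le (Nat.lt_succ_self _) (le_max_left _ _)⟩
  · -- region nesting for d1
    refine ⟨Ext.trans d.hqext hyq le_rfl, lt_of_lt_of_le (Nat.lt_succ_self _) hN₁N⟩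
  · -- sibling disjointness at coordinate jq
    refine ⟨jq, lt_of_lt_of_le (Nat.lt_succ_self _) (le_max_right _ _),
      lt_of_lt_of_le (Nat.lt_succ_self _) hN₁jq, ?_⟩
    exact fun hcontra => hjq hcontra.symm
  · rfl
  · rfl
  · -- d.k ≤ d0.k
    exact le_trans (le_trans (Nat.le_succ _) (Nat.succ_le_succ hjk)) (le_max_left _ _)
  · -- pin agrees with θ below d.k
    exact fun i hi => hyval i hi
  · -- the separating coordinate j
    exact ⟨j, hjk, lt_of_lt_of_le (Nat.lt_succ_self _) (le_max_left _ _),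
      Nat.lt_succ_self _, hj⟩
  · -- rational dodging for the 1-child
    intro i hi hcontra
    obtain ⟨l, hl, hne⟩ := hNd i hi
    exact hne (hcontra l (lt_of_lt_of_le hl hN₁Nd)).symm
  · -- htrap restated inside StepProps
    intro z hz hzext i hi
    exact hNc z hz (hzext.mono hN₁Nc) i hi

/-- one construction step, made into data via choice -/
noncomputable def stepc (d : ND b) : ND b × ND b :=
  ⟨(step_ex b hb hfib r hr d).choose, (step_ex b hb hfib r hr d).choose_spec.choose⟩

lemma stepc_spec (d : ND b) :
    StepProps b r d (stepc b hb hfib r hr d).1 (stepc b hb hfib r hr d).2 :=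
  (step_ex b hb hfib r hr d).choose_spec.choose_spec

/-- the root node -/
noncomputable def root : ND b :=
  ⟨0, (fun _ => false), 0, (fun _ => false), (omega_spec b (fun _ => false)).choose, 0,
    (fun _ => false), 0, le_rfl, le_rfl, Ext.rfl, ⟨0, fun _ _ => rfl⟩,
    (omega_spec b (fun _ => false)).choose_spec,
    fun _ _ _ i hi => absurd hi (Nat.not_lt_zero i)⟩

/-- the construction tree (lists grow at the head = latest decision) -/
noncomputable def D : List Bool → ND b
  | [] => root b
  | (i :: s) =>
    if i then (stepc b hb hfib r hr (D s)).2 else (stepc b hb hfib r hr (D s)).1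

lemma D_props (s : List Bool) :
    StepProps b r (D b hb hfib r hr s) (D b hb hfib r hr (false :: s))
      (D b hb hfib r hr (true :: s)) := by
  have h := stepc_spec b hb hfib r hr (D b hb hfib r hr s)
  simpa [D] using h

/-- prefix nodes of a branch -/
def node (α : ℕ → Bool) : ℕ → List Bool
  | 0 => []
  | n + 1 => α n :: node α n

lemma D_cons (s : List Bool) (i : Bool) :
    D b hb hfib r hr (i :: s) =
      (if i then (stepc b hb hfib r hr (D b hb hfib r hr s)).2
       else (stepc b hb hfib r hr (D b hb hfib r hr s)).1) := rfl

lemma D_child_props (s : List Bool) (i : Bool) :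
    Ext (D b hb hfib r hr s).w (D b hb hfib r hr s).N (D b hb hfib r hr (i :: s)).w ∧
      (D b hb hfib r hr s).N < (D b hb hfib r hr (i :: s)).N ∧
      (D b hb hfib r hr (i :: s)).dep = (D b hb hfib r hr s).dep + 1 := by
  have h := D_props b hb hfib r hr s
  obtain ⟨h0dep, h1dep, ⟨h0e, h0n⟩, ⟨h1e, h1n⟩, _⟩ := h
  cases i
  · exact ⟨h0e, h0n, h0dep⟩
  · exact ⟨h1e, h1n, h1dep⟩

lemma D_dep (α : ℕ → Bool) (n : ℕ) : (D b hb hfib r hr (node α n)).dep = n := by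
  induction n with
  | zero => rfl
  | succ n ih =>
    have := (D_child_props b hb hfib r hr (node α n) (α n)).2.2
    simpa [node, ih] using this

lemma D_N_ge (α : ℕ → Bool) (n : ℕ) : n ≤ (D b hb hfib r hr (node α n)).N := by
  have h1 := (D b hb hfib r hr (node α n)).hdepN
  rw [D_dep b hb hfib r hr α n] at h1
  exact h1

lemma D_chain (α : ℕ → Bool) {n m : ℕ} (h : n ≤ m) :
    Ext (D b hb hfib r hr (node α n)).w (D b hb hfib r hr (node α n)).N
      (D b hb hfib r hr (node α m)).w ∧
      (D b hb hfib r hr (node α n)).N ≤ (D b hb hfib r hr (node α m)).N := by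
  induction m with
  | zero =>
    have : n = 0 := Nat.le_zero.mp h
    subst this; exact ⟨Ext.rfl, le_rfl⟩
  | succ m ih =>
    rcases Nat.le_succ_iff_eq_or_le.mp h with h' | h'
    · subst h'; exact ⟨Ext.rfl, le_rfl⟩
    · obtain ⟨he, hN⟩ := ih h'
      obtain ⟨he2, hN2, _⟩ := D_child_props b hb hfib r hr (node α m) (α m)
      exact ⟨Ext.trans he (he2.mono hN) le_rfl,
        le_trans hN (le_of_lt hN2)⟩

/-- the embedding -/
noncomputable def ff (α : ℕ → Bool) : ℕ → Bool :=
  fun i => (D b hb hfib r hr (node α (i + 1))).w i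

lemma ff_stab (α : ℕ → Bool) (n i : ℕ) (hi : i < (D b hb hfib r hr (node α n)).N) :
    ff b hb hfib r hr α i = (D b hb hfib r hr (node α n)).w i := by
  rcases le_total n (i + 1) with h | h
  · obtain ⟨he, _⟩ := D_chain b hb hfib r hr α h
    exact he i hi
  · obtain ⟨he, _⟩ := D_chain b hb hfib r hr α h
    have hlt : i < (D b hb hfib r hr (node α (i + 1))).N :=
      lt_of_lt_of_le (Nat.lt_succ_self i) (D_N_ge b hb hfib r hr α (i + 1))
    exact (he i hlt).symm

lemma ff_mem (α : ℕ → Bool) (n : ℕ) :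
    Ext (D b hb hfib r hr (node α n)).w (D b hb hfib r hr (node α n)).N
      (ff b hb hfib r hr α) :=
  fun i hi => ff_stab b hb hfib r hr α n i hi

lemma node_eq_of_agree {α β : ℕ → Bool} (n : ℕ) (h : ∀ i < n, α i = β i) :
    node α n = node β n := by
  induction n with
  | zero => rfl
  | succ n ih =>
    simp only [node]
    rw [h n (Nat.lt_succ_self n), ih (fun i hi => h i (Nat.lt_succ_of_lt hi))]

/-- along a stretch of `false` input bits, the tail data persists -/
lemma tail_chain (α : ℕ → Bool) {K n : ℕ} (hK : K ≤ n)
    (h : ∀ m, K ≤ m → m < n → α m = false) :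
    (D b hb hfib r hr (node α n)).q = (D b hb hfib r hr (node α K)).q ∧
    (D b hb hfib r hr (node α n)).θ = (D b hb hfib r hr (node α K)).θ ∧
    (D b hb hfib r hr (node α K)).k ≤ (D b hb hfib r hr (node α n)).k := by
  induction n with
  | zero =>
    have : K = 0 := Nat.le_zero.mp hK
    subst this; exact ⟨rfl, rfl, le_rfl⟩
  | succ n ih =>
    rcases Nat.le_succ_iff_eq_or_le.mp hK with h' | h'
    · subst h'; exact ⟨rfl, rfl, le_rfl⟩
    · have hα : α n = false := h n h' (Nat.lt_succ_self n)
      have hnode : node α (n + 1) = false :: node α n := by simp [node, hα]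
      obtain ⟨hq, hθ, hk⟩ := ih h' (fun m h1 h2 => h m h1 (Nat.lt_succ_of_lt h2))
      obtain ⟨_, _, _, _, _, h0q, h0θ, h0k, _⟩ := D_props b hb hfib r hr (node α n)
      rw [hnode]
      exact ⟨h0q.trans hq, h0θ.trans hθ, le_trans hk h0k⟩

lemma ff_Pfin (α : ℕ → Bool) (hα : α ∈ Pfin) : ff b hb hfib r hr α ∈ Pfin := by
  obtain ⟨K, hK⟩ := hα
  have heq : ff b hb hfib r hr α = (D b hb hfib r hr (node α K)).q := by
    funext i
    set n := max K (i + 1) with hn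
    have hiN : i < (D b hb hfib r hr (node α n)).N :=
      lt_of_lt_of_le (lt_of_lt_of_le (Nat.lt_succ_self i) (le_max_right _ _))
        (D_N_ge b hb hfib r hr α n)
    have h1 : ff b hb hfib r hr α i = (D b hb hfib r hr (node α n)).w i :=
      ff_stab b hb hfib r hr α n i hiN
    have h2 : (D b hb hfib r hr (node α n)).q i = (D b hb hfib r hr (node α n)).w i :=
      (D b hb hfib r hr (node α n)).hqext i hiN
    have h3 : (D b hb hfib r hr (node α n)).q = (D b hb hfib r hr (node α K)).q :=
      (tail_chain b hb hfib r hr α (le_max_left _ _)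
        (fun m h1' _ => hK m h1')).1
    rw [h1, ← h2, h3]
  rw [heq]
  exact (D b hb hfib r hr (node α K)).hqfin

lemma ff_Pinf (α : ℕ → Bool) (hα : α ∈ Pinf) : ff b hb hfib r hr α ∈ Pinf := by
  intro hmem
  rw [hr] at hmem
  obtain ⟨i₀, hi₀⟩ := hmem
  obtain ⟨p, hp, hptrue⟩ := mem_Pinf_iff.mp hα i₀
  have hnode : node α (p + 1) = true :: node α p := by simp [node, hptrue]
  obtain ⟨_, _, _, _, _, _, _, _, _, _, hdodge, _⟩ := D_props b hb hfib r hr (node α p)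
  have hdep : (D b hb hfib r hr (true :: node α p)).dep = p + 1 := by
    rw [← hnode]; exact D_dep b hb hfib r hr α (p + 1)
  have hi₀dep : i₀ < (D b hb hfib r hr (true :: node α p)).dep := by
    rw [hdep]; exact Nat.lt_succ_of_le hp
  apply hdodge i₀ hi₀dep
  rw [hi₀]
  have := ff_mem b hb hfib r hr α (p + 1)
  rw [hnode] at this
  exact this

lemma ff_inj : Function.Injective (ff b hb hfib r hr) := by
  intro α β h
  by_contra hne
  have hex : ∃ n, α n ≠ β n := Function.ne_iff.mp hne
  set d := Nat.find hex with hd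
  have hagree : ∀ i < d, α i = β i := fun i hi => not_ne_iff.mp (Nat.find_min hex hi)
  have hdne : α d ≠ β d := Nat.find_spec hex
  have hs : node β d = node α d := node_eq_of_agree d (fun i hi => (hagree i hi).symm)
  obtain ⟨_, _, _, _, ⟨i, hi0, hi1, hiw⟩, _⟩ := D_props b hb hfib r hr (node α d)
  have hα1 : node α (d + 1) = α d :: node α d := rfl
  have hβ1 : node β (d + 1) = β d :: node α d := by simp [node, hs]
  have hval : ∀ γ : ℕ → Bool, ∀ c : Bool, node γ (d+1) = c :: node α d →
      ff b hb hfib r hr γ i = (D b hb hfib r hr (c :: node α d)).w i := by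
    intro γ c hc
    have hiN : i < (D b hb hfib r hr (node γ (d+1))).N := by
      rw [hc]; cases c
      · exact hi0
      · exact hi1
    have := ff_stab b hb hfib r hr γ (d+1) i hiN
    rw [hc] at this; exact this
  cases hαd : α d
  · have hβd : β d = true := by
      cases hβd' : β d
      · rw [hαd, hβd'] at hdne; exact absurd rfl hdne
      · rfl
    have h1 := hval α false (by rw [hα1, hαd])
    have h2 := hval β true (by rw [hβ1, hβd])
    rw [h] at h1
    exact hiw (h1.symm.trans h2)
  · have hβd : β d = false := by
      cases hβd' : β d
      · rfl
      · rw [hαd, hβd'] at hdne; exact absurd rfl hdne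
    have h1 := hval α true (by rw [hα1, hαd])
    have h2 := hval β false (by rw [hβ1, hβd])
    rw [h] at h1
    exact hiw (h2.symm.trans h1)

lemma ff_cont : Continuous (ff b hb hfib r hr) := by
  apply continuous_pi
  intro i
  rw [continuous_iff_continuousAt]
  intro α
  have hev : (fun z => ff b hb hfib r hr z i) =ᶠ[nhds α]
      (fun _ => ff b hb hfib r hr α i) := by
    filter_upwards [cyl_mem_nhds α (i + 1)] with z hz
    show (D b hb hfib r hr (node z (i+1))).w i = (D b hb hfib r hr (node α (i+1))).w i
    rw [node_eq_of_agree (i + 1) (fun l hl => hz l hl)]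
  exact (Filter.tendsto_congr' hev).mpr tendsto_const_nhds

/-- the key separation lemma -/
lemma ff_sep {α β : ℕ → Bool} (hα : α ∈ Pinf) (hβ : β ∈ Pinf) (d : ℕ)
    (hagree : ∀ i < d, α i = β i) (hαd : α d = false) (hβd : β d = true) :
    b ⟨ff b hb hfib r hr α, ff_Pinf b hb hfib r hr α hα⟩ ≠
      b ⟨ff b hb hfib r hr β, ff_Pinf b hb hfib r hr β hβ⟩ := by
  set s := node α d with hsdef
  have hs : node β d = s := node_eq_of_agree d (fun i hi => (hagree i hi).symm)
  obtain ⟨_, _, _, _, _, _, h0θ, h0k, _, ⟨j, hjk, hjd0, hjtrap, hjne⟩, _, _⟩ :=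
    D_props b hb hfib r hr s
  set d0 := D b hb hfib r hr (false :: s) with hd0def
  set d1 := D b hb hfib r hr (true :: s) with hd1def
  -- value of β's branch at coordinate j
  have hβnode : node β (d + 1) = true :: s := by simp [node, hβd, hs]
  have hβmem : Ext d1.w d1.N (ff b hb hfib r hr β) := by
    have := ff_mem b hb hfib r hr β (d + 1)
    rw [hβnode] at this; exact this
  have hβval : b ⟨ff b hb hfib r hr β, ff_Pinf b hb hfib r hr β hβ⟩ j = d1.trapv j :=
    d1.htrap _ _ hβmem j hjtrap
  -- the first `true` of α after d
  have hex : ∃ n, d < n ∧ α n = true := by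
    obtain ⟨n, hn, ht⟩ := mem_Pinf_iff.mp hα (d + 1)
    exact ⟨n, Nat.lt_of_succ_le hn, ht⟩
  set p := Nat.find hex with hpdef
  obtain ⟨hdp, hpt⟩ := Nat.find_spec hex
  have hfalse : ∀ m, d + 1 ≤ m → m < p → α m = false := by
    intro m h1 h2
    cases hm : α m
    · rfl
    · exact absurd ⟨Nat.lt_of_succ_le h1, hm⟩ (Nat.find_min hex h2)
  -- chain from d+1 to p
  have hα1node : node α (d + 1) = false :: s := by simp [node, hαd, hsdef]
  have hchain := tail_chain b hb hfib r hr α (Nat.succ_le_of_lt hdp) hfalse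
  rw [hα1node] at hchain
  obtain ⟨_, hθchain, hkchain⟩ := hchain
  set tp := D b hb hfib r hr (node α p) with htpdef
  -- step at node α p
  obtain ⟨_, _, _, _, _, _, _, _, hpin, ⟨j', hj'1, _, hj'2, _⟩, _, _⟩ :=
    D_props b hb hfib r hr (node α p)
  set u := D b hb hfib r hr (true :: node α p) with hudef
  have hpnode : node α (p + 1) = true :: node α p := by simp [node, hpt, hpdef]
  have hαmem : Ext u.w u.N (ff b hb hfib r hr α) := by
    have := ff_mem b hb hfib r hr α (p + 1)
    rw [hpnode] at this; exact this
  have hjtp : j < tp.k := lt_of_lt_of_le hjd0 hkchain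
  have hjum : j < u.trapm := lt_of_lt_of_le hjtp (le_trans hj'1 (le_of_lt hj'2))
  have hαval : b ⟨ff b hb hfib r hr α, ff_Pinf b hb hfib r hr α hα⟩ j = u.trapv j :=
    u.htrap _ _ hαmem j hjum
  have hαθ : u.trapv j = (D b hb hfib r hr s).θ j := by
    have h1 : u.trapv j = tp.θ j := hpin j hjtp
    rw [h1, hθchain, h0θ]
  intro hcontra
  apply hjne
  have : b ⟨ff b hb hfib r hr α, ff_Pinf b hb hfib r hr α hα⟩ j =
      b ⟨ff b hb hfib r hr β, ff_Pinf b hb hfib r hr β hβ⟩ j := by rw [hcontra]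
  rw [hαval, hαθ] at this
  rw [hβval] at this
  exact this.symm

end WithB

end IND

theorem injectivize_nowhere_dense_to_one
    (b : Pinf → (ℕ → Bool)) (hb : Continuous b)
    (hfib : ∀ γ : ℕ → Bool, IsNowhereDense (Subtype.val '' (b ⁻¹' {γ}))) :
    ∃ f : (ℕ → Bool) → (ℕ → Bool), Function.Injective f ∧ Continuous f ∧
      f ⁻¹' Pfin = Pfin ∧
      ∃ hmap : ∀ α, α ∈ Pinf → f α ∈ Pinf,
        ∀ α β (hα : α ∈ Pinf) (hβ : β ∈ Pinf), α ≠ β →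
          b ⟨f α, hmap α hα⟩ ≠ b ⟨f β, hmap β hβ⟩ := by
  classical
  -- enumerate Pfin
  have hc : Set.Countable Pfin := by
    have hsub : Pfin ⊆ Set.range (fun l : List Bool => fun i => l.getD i false) := by
      intro q hq
      obtain ⟨K, hK⟩ := hq
      refine ⟨List.ofFn (fun j : Fin K => q j), ?_⟩
      funext i
      by_cases hi : i < K
      · simp [List.getD_eq_getElem?_getD, List.getElem?_ofFn, hi]
      · simp [List.getD_eq_getElem?_getD, List.getElem?_ofFn, hi,
          List.ofFnNthVal, hK i (Nat.le_of_not_lt hi)]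
    exact (Set.countable_range _).mono hsub
  obtain ⟨r, hr⟩ := hc.exists_eq_range ⟨(fun _ => false), 0, fun _ _ => rfl⟩
  refine ⟨IND.ff b hb hfib r hr, IND.ff_inj b hb hfib r hr, IND.ff_cont b hb hfib r hr,
    ?_, fun α hα => IND.ff_Pinf b hb hfib r hr α hα, ?_⟩
  · ext α
    simp only [Set.mem_preimage]
    constructor
    · intro h
      by_contra hαn
      exact IND.ff_Pinf b hb hfib r hr α hαn h
    · exact IND.ff_Pfin b hb hfib r hr α
  · intro α β hα hβ hne
    have hex : ∃ n, α n ≠ β n := Function.ne_iff.mp hne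
    have hagree : ∀ i < Nat.find hex, α i = β i :=
      fun i hi => not_ne_iff.mp (Nat.find_min hex hi)
    have hdne : α (Nat.find hex) ≠ β (Nat.find hex) := Nat.find_spec hex
    cases hαd : α (Nat.find hex)
    · have hβd : β (Nat.find hex) = true := by
        cases hβd' : β (Nat.find hex)
        · rw [hαd, hβd'] at hdne; exact absurd rfl hdne
        · rfl
      exact IND.ff_sep b hb hfib r hr hα hβ (Nat.find hex) hagree hαd hβd
    · have hβd : β (Nat.find hex) = false := by
        cases hβd' : β (Nat.find hex)
        · rfl
        · rw [hαd, hβd'] at hdne; exact absurd rfl hdne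
      exact (IND.ff_sep b hb hfib r hr hβ hα (Nat.find hex)
        (fun i hi => (hagree i hi).symm) hβd hαd).symm
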